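/- Let g : ℝᵈ → ℝ be differentiable, h : ℝᵈ → ℝ convex, λ > 0, and suppose the descent condition g(T_λ(y)) ≤ g(y) + ⟨∇g(y), T_λ(y) − y⟩ + (1/(2λ))‖y − T_λ(y)‖² holds, where T_λ(y) = prox_{λh}(y − λ∇g(y)). Then for f = g + h and all x: f(x) − f(T_λ(y)) ≥ ℓ(x,y) + (1/(2λ))‖x − T_λ(y)‖² − (1/(2λ))‖x − y‖², where ℓ(x,y) = g(x) − g(y) − ⟨∇g(y), x − y⟩. -/

import Mathlib

open Set

open scoped RealInnerProductSpace in
private lemma strong_prox {E : Type*} [NormedAddCommGroup E] [InnerProductSpace ℝ E]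
    (h : E → ℝ) (hhconv : ConvexOn ℝ univ h) (c : ℝ) (hc : 0 < c)
    (T w x : E) (hT : ∀ z, h T + c * ‖T - w‖ ^ 2 ≤ h z + c * ‖z - w‖ ^ 2) :
    2 * c * ⟪T - w, T - x⟫ ≤ h x - h T := by
  have hD : (0:ℝ) ≤ c * ‖x - T‖ ^ 2 := by positivity
  refine le_of_forall_pos_le_add fun ε hε => ?_
  set D := c * ‖x - T‖ ^ 2 with hDdef
  set t : ℝ := min 1 (ε / (D + 1)) with htdef
  have ht0 : 0 < t := lt_min one_pos (by positivity)
  have ht1 : t ≤ 1 := min_le_left _ _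
  have htε : t * D ≤ ε := by
    have h1 : t ≤ ε / (D + 1) := min_le_right _ _
    have h2 : t * (D + 1) ≤ ε := by
      rw [← le_div_iff₀ (by positivity)]; exact h1
    nlinarith
  have hconv : h (T + t • (x - T)) ≤ (1 - t) * h T + t * h x := by
    have := hhconv.2 (mem_univ T) (mem_univ x) (by linarith : (0:ℝ) ≤ 1 - t)
      (le_of_lt ht0) (by ring)
    have heq : (1 - t) • T + t • x = T + t • (x - T) := by module
    rwa [heq] at this
  have hnorm : ‖T + t • (x - T) - w‖ ^ 2
      = ‖T - w‖ ^ 2 + 2 * t * ⟪T - w, x - T⟫ + t ^ 2 * ‖x - T‖ ^ 2 := by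
    have heq : T + t • (x - T) - w = (T - w) + t • (x - T) := by abel
    rw [heq, norm_add_sq_real, real_inner_smul_right, norm_smul,
      Real.norm_eq_abs, mul_pow, sq_abs]
    ring
  have hkey := hT (T + t • (x - T))
  rw [hnorm] at hkey
  have hcancel : 0 ≤ t * (h x - h T) + c * (2 * t * ⟪T - w, x - T⟫ + t ^ 2 * ‖x - T‖ ^ 2) := by
    nlinarith [hconv]
  have hinner : ⟪T - w, x - T⟫ = -⟪T - w, T - x⟫ := by
    rw [← inner_neg_right]; congr 1; abel
  rw [hinner] at hcancel
  -- divide by t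
  have : 2 * c * ⟪T - w, T - x⟫ ≤ h x - h T + t * D := by
    rw [hDdef]
    nlinarith [hcancel, ht0]
  linarith

/-- Euclidean fundamental prox-grad inequality (specialization of
Theorem 5.1/Corollary 5.2): if the descent condition holds at `y`, then for
`f = g + h` and all `x`,
`f(x) − f(T_λ y) ≥ ℓ(x,y) + (1/(2λ))‖x − T_λ y‖² − (1/(2λ))‖x − y‖²`,
where `ℓ(x,y) = g(x) − g(y) − ⟨∇g(y), x − y⟩`. -/
theorem stmt7 {d : ℕ} (g h : EuclideanSpace ℝ (Fin d) → ℝ)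
    (g' : EuclideanSpace ℝ (Fin d) → EuclideanSpace ℝ (Fin d))
    (lam : ℝ) (hlam : 0 < lam)
    (hgrad : ∀ x, HasGradientAt g (g' x) x)
    (hhconv : ConvexOn ℝ univ h)
    (prox : EuclideanSpace ℝ (Fin d) → EuclideanSpace ℝ (Fin d))
    (hprox : ∀ w, ∀ z, h (prox w) + (1 / (2 * lam)) * ‖prox w - w‖ ^ 2 ≤
      h z + (1 / (2 * lam)) * ‖z - w‖ ^ 2)
    (y : EuclideanSpace ℝ (Fin d))
    (hdescent :
      g (prox (y - lam • g' y)) ≤ g y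
        + inner ℝ (g' y) (prox (y - lam • g' y) - y)
        + (1 / (2 * lam)) * ‖y - prox (y - lam • g' y)‖ ^ 2) :
    ∀ x : EuclideanSpace ℝ (Fin d),
      (g x + h x) - (g (prox (y - lam • g' y)) + h (prox (y - lam • g' y))) ≥
        (g x - g y - inner ℝ (g' y) (x - y))
        + (1 / (2 * lam)) * ‖x - prox (y - lam • g' y)‖ ^ 2
        - (1 / (2 * lam)) * ‖x - y‖ ^ 2 := by
  intro x
  set w := y - lam • g' y with hw
  set T := prox w with hTdef
  set c : ℝ := 1 / (2 * lam) with hc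
  have hc0 : 0 < c := by positivity
  have key := strong_prox h hhconv c hc0 T w x (hprox w)
  -- expand inner product
  have hexp : (inner ℝ (T - w) (T - x) : ℝ)
      = inner ℝ (T - y) (T - x) + lam * inner ℝ (g' y) (T - x) := by
    rw [hw]
    have : T - (y - lam • g' y) = (T - y) + lam • g' y := by abel
    rw [this, inner_add_left, real_inner_smul_left]
  have hpolar : ‖x - y‖ ^ 2 = ‖T - y‖ ^ 2 - 2 * inner ℝ (T - y) (T - x) + ‖T - x‖ ^ 2 := by
    have heq : x - y = (T - y) - (T - x) := by abel
    rw [heq, norm_sub_sq_real]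
  have h1 : (inner ℝ (g' y) (T - x) : ℝ) = inner ℝ (g' y) (T - y) - inner ℝ (g' y) (x - y) := by
    rw [← inner_sub_right]; congr 1; abel
  have h2 : ‖T - x‖ = ‖x - T‖ := norm_sub_rev _ _
  have h3 : ‖T - y‖ = ‖y - T‖ := norm_sub_rev _ _
  have h4 : 2 * c * lam = 1 := by rw [hc]; field_simp
  rw [hexp, h1] at key
  have hd : g T ≤ g y + inner ℝ (g' y) (T - y) + c * ‖y - T‖ ^ 2 := hdescent
  rw [h2, h3] at hpolar
  have e1 : 2 * c * ((inner ℝ (T - y) (T - x) : ℝ)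
        + lam * (inner ℝ (g' y) (T - y) - inner ℝ (g' y) (x - y)))
      = 2 * c * inner ℝ (T - y) (T - x)
        + ((inner ℝ (g' y) (T - y) : ℝ) - inner ℝ (g' y) (x - y)) := by
    rw [hc]; field_simp
  have hI : (inner ℝ (T - y) (T - x) : ℝ)
      = (‖y - T‖ ^ 2 + ‖x - T‖ ^ 2 - ‖x - y‖ ^ 2) / 2 := by linarith
  have e2 : 2 * c * (inner ℝ (T - y) (T - x) : ℝ)
      = c * ‖y - T‖ ^ 2 + c * ‖x - T‖ ^ 2 - c * ‖x - y‖ ^ 2 := by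
    rw [hI]; ring
  linarith [key, e1, e2, hd]
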